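/- Let $X$ be a finite-dimensional real Banach space and let $V:X+iX \to \mathbb{R}$ be a continuous twice differentiable plurisubharmonic function such that $y \mapsto V(x+iy)$ is concave in $y \in X$ for all $x \in X$. Then $t \mapsto V(tx+z)$ is convex in $t \in \mathbb{R}$ for all $x \in X$ and $z \in X+iX$. -/

import Mathlib

open Set

variable {X : Type*} [NormedAddCommGroup X] [NormedSpace ℝ X]

/-- Second directional derivative of `V` at `p` in directions `a`, `b`. -/
noncomputable def secondDirDeriv (V : X → ℝ) (p a b : X) : ℝ :=
  fderiv ℝ (fun y => fderiv ℝ V y a) p b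

/-- Multiplication by `i` on the complexification `X + iX ≃ X × X`. -/
def Jmap (p : X × X) : X × X := (-p.2, p.1)

private lemma line_hasDerivAt {E : Type*} [NormedAddCommGroup E] [NormedSpace ℝ E]
    (z v : E) (t : ℝ) : HasDerivAt (fun t : ℝ => z + t • v) v t := by
  simpa using ((hasDerivAt_id t).smul_const v).const_add z

private lemma comp_line_hasDerivAt {E : Type*} [NormedAddCommGroup E] [NormedSpace ℝ E]
    {g : E → ℝ} (hg : Differentiable ℝ g) (z v : E) (t : ℝ) :
    HasDerivAt (fun t : ℝ => g (z + t • v)) (fderiv ℝ g (z + t • v) v) t :=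
  (hg (z + t • v)).hasFDerivAt.comp_hasDerivAt t (line_hasDerivAt z v t)

private lemma antitone_deriv_nonpos {f : ℝ → ℝ} {f' x : ℝ} (hf : Antitone f)
    (h : HasDerivAt f f' x) : f' ≤ 0 := by
  have h1 := hasDerivAt_iff_tendsto_slope.mp h
  have h2 : Filter.Tendsto (slope f x) (nhdsWithin x (Set.Ioi x)) (nhds f') :=
    h1.mono_left (nhdsWithin_mono x (fun y hy => Set.mem_compl_singleton_iff.mpr
      (ne_of_gt hy)))
  refine le_of_tendsto h2 ?_
  filter_upwards [self_mem_nhdsWithin] with y hy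
  have hxy : x < y := hy
  have hle : f y ≤ f x := hf hxy.le
  rw [slope_def_field]
  exact div_nonpos_of_nonpos_of_nonneg (by linarith) (by linarith)

/-- Let `X` be a finite-dimensional real Banach space and
`V : X + iX → ℝ` a continuous twice differentiable plurisubharmonic function such
that `y ↦ V(x + iy)` is concave for each `x`. Then `t ↦ V(t x + z)` is convex in
`t ∈ ℝ` for every `x ∈ X`, `z ∈ X + iX`. -/
theorem convex_real_direction_of_plurisubharmonic_concave_imaginary
    [FiniteDimensional ℝ X] (V : X × X → ℝ)
    (hVcont : Continuous V) (hV : ContDiff ℝ 2 V)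
    (hpsh : ∀ w v : X × X,
      0 ≤ secondDirDeriv V w v v + secondDirDeriv V w (Jmap v) (Jmap v))
    (hconc : ∀ x : X, ConcaveOn ℝ univ (fun y : X => V (x, y))) :
    ∀ (x : X) (z : X × X),
      ConvexOn ℝ univ (fun t : ℝ => V (z + t • ((x, 0) : X × X))) := by
  intro x z
  have hVd : Differentiable ℝ V := hV.differentiable two_ne_zero
  have hfd : ∀ v : X × X, Differentiable ℝ (fun p : X × X => fderiv ℝ V p v) := by
    intro v
    exact ((hV.fderiv_right (m := 1) (by norm_num)).clm_apply contDiff_const).differentiable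
      one_ne_zero
  have hd1 : ∀ (z v : X × X) (t : ℝ),
      HasDerivAt (fun t : ℝ => V (z + t • v)) (fderiv ℝ V (z + t • v) v) t :=
    fun z v t => comp_line_hasDerivAt hVd z v t
  have hd2 : ∀ (z v : X × X) (t : ℝ),
      HasDerivAt (fun t : ℝ => fderiv ℝ V (z + t • v) v)
        (secondDirDeriv V (z + t • v) v v) t :=
    fun z v t => comp_line_hasDerivAt (hfd v) z v t
  have hderiv : ∀ (z v : X × X), deriv (fun t : ℝ => V (z + t • v)) =
      fun t => fderiv ℝ V (z + t • v) v :=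
    fun z v => funext fun t => (hd1 z v t).deriv
  -- concavity in the imaginary direction gives nonpositive second derivative
  have hconc2 : ∀ (p : X × X) (x' : X),
      secondDirDeriv V p ((0 : X), x') ((0 : X), x') ≤ 0 := by
    intro p x'
    set w : X × X := ((0 : X), x') with hw
    have hcc : ConcaveOn ℝ univ (fun t : ℝ => V (p + t • w)) := by
      have h1 := (hconc p.1).comp_affineMap (AffineMap.lineMap p.2 (p.2 + x'))
      have heq : (fun y : X => V (p.1, y)) ∘ (AffineMap.lineMap p.2 (p.2 + x')) =
          fun t : ℝ => V (p + t • w) := by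
        funext t
        simp only [Function.comp_apply, AffineMap.lineMap_apply, hw, Prod.smul_mk,
          smul_zero, smul_eq_mul]
        congr 1
        ext
        · simp
        · simp [add_comm]
      rw [heq, Set.preimage_univ] at h1
      exact h1
    have hanti : Antitone (deriv (fun t : ℝ => V (p + t • w))) := by
      have h := hcc.antitoneOn_deriv (fun t _ => (hd1 p w t).differentiableAt)
      exact fun a b hab => h (mem_univ a) (mem_univ b) hab
    have h0 : HasDerivAt (deriv (fun t : ℝ => V (p + t • w)))
        (secondDirDeriv V (p + (0 : ℝ) • w) w w) 0 := by
      rw [hderiv p w]; exact hd2 p w 0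
    have := antitone_deriv_nonpos hanti h0
    simpa using this
  -- plurisubharmonicity gives nonnegative second derivative in the real direction
  have hkey : ∀ p : X × X, 0 ≤ secondDirDeriv V p ((x, 0) : X × X) ((x, 0) : X × X) := by
    intro p
    have h1 := hpsh p ((x, 0) : X × X)
    have hJ : Jmap ((x, 0) : X × X) = ((0 : X), x) := by simp [Jmap]
    rw [hJ] at h1
    have h2 := hconc2 p x
    linarith
  -- conclude convexity
  have hf' : Differentiable ℝ (fun t : ℝ => V (z + t • ((x, 0) : X × X))) :=
    fun t => (hd1 z ((x, 0) : X × X) t).differentiableAt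
  have hf'' : Differentiable ℝ (deriv (fun t : ℝ => V (z + t • ((x, 0) : X × X)))) := by
    rw [hderiv z ((x, 0) : X × X)]
    exact fun t => (hd2 z ((x, 0) : X × X) t).differentiableAt
  refine convexOn_univ_of_deriv2_nonneg hf' hf'' ?_
  intro t
  show 0 ≤ deriv (deriv fun t : ℝ => V (z + t • ((x, 0) : X × X))) t
  rw [hderiv z ((x, 0) : X × X), (hd2 z ((x, 0) : X × X) t).deriv]
  exact hkey _
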